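/- Suppose two curves g₁, g₂ on a matrix Lie group G satisfy ġᵢ = ξᵢ(t)gᵢ + X̃(gᵢ) + gᵢζᵢ(t), where X̃ satisfies the cocycle property X̃(hg) = h X̃(g) + X̃(h)g and ζ₁(t) = ζ₂(t) for all t. Then the right-invariant relative state g₁₂ = g₁g₂⁻¹ satisfies the self-contained equation d/dt g₁₂ = ξ₁(t) g₁₂ + X̃(g₁₂) − g₁₂ ξ₂(t). -/

import Mathlib

open Matrix

attribute [local instance] Matrix.linftyOpNormedRing Matrix.linftyOpNormedAlgebra

/-- If `ġᵢ = ξᵢ(t) gᵢ + X̃(gᵢ) + gᵢ ζᵢ(t)` with `X̃` satisfying the cocycle property and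
`ζ₁ = ζ₂`, then the right-invariant relative state `g₁₂ = g₁ g₂⁻¹` satisfies the
self-contained equation `d/dt g₁₂ = ξ₁(t) g₁₂ + X̃(g₁₂) − g₁₂ ξ₂(t)`. -/
theorem right_relative_state_autonomous (n : ℕ) (G : Set (Matrix (Fin n) (Fin n) ℝ))
    (hone : (1 : Matrix (Fin n) (Fin n) ℝ) ∈ G)
    (hmul : ∀ a ∈ G, ∀ b ∈ G, a * b ∈ G)
    (hinv : ∀ a ∈ G, a⁻¹ ∈ G)
    (Xt : Matrix (Fin n) (Fin n) ℝ → Matrix (Fin n) (Fin n) ℝ)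
    (ξ₁ ξ₂ ζ₁ ζ₂ : ℝ → Matrix (Fin n) (Fin n) ℝ)
    (hcoc : ∀ g ∈ G, ∀ h ∈ G, Xt (h * g) = h * Xt g + Xt h * g)
    (hζ : ∀ t, ζ₁ t = ζ₂ t)
    (g₁ g₂ : ℝ → Matrix (Fin n) (Fin n) ℝ)
    (hg₁G : ∀ t, g₁ t ∈ G) (hg₂G : ∀ t, g₂ t ∈ G)
    (hunit : ∀ t, IsUnit (g₂ t))
    (hdg₁ : ∀ t, HasDerivAt g₁ (ξ₁ t * g₁ t + Xt (g₁ t) + g₁ t * ζ₁ t) t)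
    (hdg₂ : ∀ t, HasDerivAt g₂ (ξ₂ t * g₂ t + Xt (g₂ t) + g₂ t * ζ₂ t) t) :
    ∀ t, HasDerivAt (fun s => g₁ s * (g₂ s)⁻¹)
      (ξ₁ t * (g₁ t * (g₂ t)⁻¹) + Xt (g₁ t * (g₂ t)⁻¹)
        - (g₁ t * (g₂ t)⁻¹) * ξ₂ t) t := by
  intro t
  -- basic facts
  have hX1 : Xt 1 = 0 := by
    have := hcoc 1 hone 1 hone
    simp only [one_mul, mul_one] at this
    exact (right_eq_add.mp this)
  have hdet : IsUnit (g₂ t).det := (Matrix.isUnit_iff_isUnit_det _).mp (hunit t)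
  have h2l : (g₂ t)⁻¹ * g₂ t = 1 := Matrix.nonsing_inv_mul _ hdet
  have h2r : g₂ t * (g₂ t)⁻¹ = 1 := Matrix.mul_nonsing_inv _ hdet
  have hXinv : Xt ((g₂ t)⁻¹) = -((g₂ t)⁻¹ * Xt (g₂ t) * (g₂ t)⁻¹) := by
    have h := hcoc (g₂ t) (hg₂G t) ((g₂ t)⁻¹) (hinv _ (hg₂G t))
    rw [h2l, hX1] at h
    have h' : Xt ((g₂ t)⁻¹) * g₂ t = -((g₂ t)⁻¹ * Xt (g₂ t)) :=
      eq_neg_of_add_eq_zero_right h.symm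
    calc Xt ((g₂ t)⁻¹) = Xt ((g₂ t)⁻¹) * (g₂ t * (g₂ t)⁻¹) := by rw [h2r, mul_one]
      _ = (Xt ((g₂ t)⁻¹) * g₂ t) * (g₂ t)⁻¹ := by noncomm_ring
      _ = -((g₂ t)⁻¹ * Xt (g₂ t) * (g₂ t)⁻¹) := by rw [h']; noncomm_ring
  -- derivative of the inverse
  set d₂ := ξ₂ t * g₂ t + Xt (g₂ t) + g₂ t * ζ₂ t with hd₂
  have hinvderiv : HasDerivAt (fun s => (g₂ s)⁻¹)
      (-((g₂ t)⁻¹ * d₂ * (g₂ t)⁻¹)) t := by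
    have hF := (hasFDerivAt_ringInverse (𝕜 := ℝ) (hunit t).unit).comp_hasDerivAt t
      (hdg₂ t)
    have heq : (fun s => (g₂ s)⁻¹) = fun s => Ring.inverse (g₂ s) := by
      funext s; exact Matrix.nonsing_inv_eq_ringInverse _
    rw [heq]
    refine HasDerivAt.congr_deriv hF ?_
    simp [Matrix.coe_units_inv, Matrix.nonsing_inv_eq_ringInverse]
    rfl
  have hmulderiv := (hdg₁ t).mul hinvderiv
  refine HasDerivAt.congr_deriv hmulderiv ?_
  rw [hcoc ((g₂ t)⁻¹) (hinv _ (hg₂G t)) (g₁ t) (hg₁G t), hXinv, hζ t, hd₂]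
  simp only [mul_add, add_mul, mul_neg, neg_mul, mul_assoc,
    Matrix.mul_nonsing_inv_cancel_left _ _ hdet, Matrix.nonsing_inv_mul_cancel_left _ _ hdet,
    h2r, mul_one]
  abel
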